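/- arXiv:1701.07092 — 2 statements merged into one kernel-verified Lean document; each statement's English description precedes it below -/
import Mathlib

section
/- Let $b,c$ be positive integers and define $T(i,j) := \sum_{s=1}^{\min\{i,j\}} A(b,c,i,s)\cdot C(b,c,s,j)$. Then for all positive integers $i,j$: $(c-i+j+1)\cdot T(i,j+1) + (j-i-b)\cdot T(i,j) = 0$. -/
/-- The binomial coefficient for integer arguments, over ℚ:
`n!/((n-k)! k!)` if `0 ≤ k ≤ n`, and `0` otherwise. -/
noncomputable def ibinom (n k : ℤ) : ℚ :=
  if 0 ≤ k ∧ k ≤ n then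
    (Nat.factorial n.toNat : ℚ) / (Nat.factorial (n - k).toNat * Nat.factorial k.toNat)
  else 0

/-- The entry `A(b,c,i,j)` of the lower-triangular factor. -/
noncomputable def Afun (b c i j : ℕ) : ℚ :=
  if j ≤ i ∧ i ≤ c + j then
    (Nat.factorial c * Nat.factorial (i - 1) * Nat.factorial (b + j - 1) : ℚ) /
      (Nat.factorial (j - 1) * Nat.factorial (b + i - 1) * Nat.factorial (i - j) *
        Nat.factorial (c + j - i))
  else 0

/-- The entry `C(b,c,i,j)` of the upper-triangular factor. -/
noncomputable def Cfun (b c i j : ℕ) : ℚ :=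
  if i ≤ j ∧ j ≤ b + i then
    (Nat.factorial b * Nat.factorial (j - 1) * Nat.factorial (b + c + i - 1) : ℚ) /
      (Nat.factorial (b + i - 1) * Nat.factorial (c + j - 1) * Nat.factorial (j - i) *
        Nat.factorial (b + i - j))
  else 0

/-- The entry `D(i)` (last column of the upper-triangular factor), in the
integer parameters `n, m`. -/
noncomputable def Dfun (b c : ℕ) (n m : ℤ) (i : ℕ) : ℚ :=
  ∑ v ∈ Finset.Icc 1 i, (-1 : ℚ) ^ (i - v) *
    ((Nat.factorial (i - 1) * Nat.factorial (b + v - 1) * Nat.factorial (c + i - v - 1) : ℚ) /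
      (Nat.factorial (c - 1) * Nat.factorial (v - 1) * Nat.factorial (b + i - 1) *
        Nat.factorial (i - v))) * ibinom n (m - v)

/-- The entry `B(j)` (last row of the lower-triangular factor), in the
integer parameters `n', m'`. -/
noncomputable def Bfun (b c : ℕ) (n' m' : ℤ) (j : ℕ) : ℚ :=
  ∑ v ∈ Finset.Icc 1 j, (-1 : ℚ) ^ (j - v) *
    ((Nat.factorial (b + j - 1) * Nat.factorial (c + v - 1) * Nat.factorial (b + j - v - 1) : ℚ) /
      (Nat.factorial (b - 1) * Nat.factorial (v - 1) * Nat.factorial (j - v) *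
        Nat.factorial (b + c + j - 1))) * ibinom n' (v - m')

/-- MacMahon's product formula for the number of rhombus tilings of the
semi-regular hexagon with side lengths `a, b, c`. -/
noncomputable def macmahon (a b c : ℕ) : ℚ :=
  ∏ i ∈ Finset.Icc 1 a, ∏ j ∈ Finset.Icc 1 b, ∏ k ∈ Finset.Icc 1 c,
    (((i : ℚ) + j + k - 1) / ((i : ℚ) + j + k - 2))

noncomputable def Bq (b c i j s : ℕ) : ℚ :=
  if 1 ≤ s ∧ s ≤ i ∧ i ≤ c + s ∧ s ≤ j + 1 ∧ j ≤ b + s then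
    (Nat.factorial b * Nat.factorial c * Nat.factorial (i - 1) * Nat.factorial (j - 1) *
        Nat.factorial (b + c + s - 1) : ℚ) /
      (Nat.factorial (s - 1) * Nat.factorial (b + i - 1) * Nat.factorial (i - s) *
        Nat.factorial (c + s - i) * Nat.factorial (c + j) * Nat.factorial (j + 1 - s) *
        Nat.factorial (b + s - j))
  else 0

lemma Afun_pos {b c i j : ℕ} (h1 : j ≤ i) (h2 : i ≤ c + j) :
    Afun b c i j =
      (Nat.factorial c * Nat.factorial (i - 1) * Nat.factorial (b + j - 1) : ℚ) /
        (Nat.factorial (j - 1) * Nat.factorial (b + i - 1) * Nat.factorial (i - j) *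
          Nat.factorial (c + j - i)) := by
  unfold Afun; exact if_pos ⟨h1, h2⟩

lemma Afun_zero {b c i j : ℕ} (h : ¬(j ≤ i ∧ i ≤ c + j)) : Afun b c i j = 0 := by
  unfold Afun; exact if_neg h

lemma Cfun_pos {b c i j : ℕ} (h1 : i ≤ j) (h2 : j ≤ b + i) :
    Cfun b c i j =
      (Nat.factorial b * Nat.factorial (j - 1) * Nat.factorial (b + c + i - 1) : ℚ) /
        (Nat.factorial (b + i - 1) * Nat.factorial (c + j - 1) * Nat.factorial (j - i) *
          Nat.factorial (b + i - j)) := by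
  unfold Cfun; exact if_pos ⟨h1, h2⟩

lemma Cfun_zero {b c i j : ℕ} (h : ¬(i ≤ j ∧ j ≤ b + i)) : Cfun b c i j = 0 := by
  unfold Cfun; exact if_neg h

lemma Bq_pos {b c i j s : ℕ} (h1 : 1 ≤ s) (h2 : s ≤ i) (h3 : i ≤ c + s) (h4 : s ≤ j + 1)
    (h5 : j ≤ b + s) :
    Bq b c i j s =
      (Nat.factorial b * Nat.factorial c * Nat.factorial (i - 1) * Nat.factorial (j - 1) *
          Nat.factorial (b + c + s - 1) : ℚ) /
        (Nat.factorial (s - 1) * Nat.factorial (b + i - 1) * Nat.factorial (i - s) *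
          Nat.factorial (c + s - i) * Nat.factorial (c + j) * Nat.factorial (j + 1 - s) *
          Nat.factorial (b + s - j)) := by
  unfold Bq; exact if_pos ⟨h1, h2, h3, h4, h5⟩

lemma Bq_zero {b c i j s : ℕ} (h : ¬(1 ≤ s ∧ s ≤ i ∧ i ≤ c + s ∧ s ≤ j + 1 ∧ j ≤ b + s)) :
    Bq b c i j s = 0 := by
  unfold Bq; exact if_neg h

lemma facQ_ne (n : ℕ) : (Nat.factorial n : ℚ) ≠ 0 :=
  Nat.cast_ne_zero.mpr (Nat.factorial_ne_zero n)

set_option maxHeartbeats 1000000 in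
lemma Rlem (b c i j s : ℕ) (hs : 1 ≤ s) :
    (s : ℚ) * ((c : ℚ) + s + 1 - i) * ((b : ℚ) + s + 1 - j) * Bq b c i j (s + 1)
      = ((b : ℚ) + c + s) * ((i : ℚ) - s) * ((j : ℚ) + 1 - s) * Bq b c i j s := by
  by_cases h1 : s + 1 ≤ i
  · by_cases h2 : i ≤ c + s
    · by_cases h3 : s ≤ j
      · by_cases h4 : j ≤ b + s
        · -- main case
          obtain ⟨p, rfl⟩ : ∃ p, s = p + 1 := ⟨s - 1, by omega⟩
          obtain ⟨q, rfl⟩ : ∃ q, i = p + 1 + 1 + q := ⟨i - (p + 1 + 1), by omega⟩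
          obtain ⟨r, rfl⟩ : ∃ r, c = q + 1 + r := ⟨c - (q + 1), by omega⟩
          obtain ⟨t, rfl⟩ : ∃ t, j = p + 1 + t := ⟨j - (p + 1), by omega⟩
          obtain ⟨u, rfl⟩ : ∃ u, b = t + u := ⟨b - t, by omega⟩
          rw [Bq_pos (by omega) (by omega) (by omega) (by omega) (by omega),
            Bq_pos (by omega) (by omega) (by omega) (by omega) (by omega)]
          rw [show p + 1 + 1 + q - 1 = p + q + 1 by omega,
            show p + 1 + t - 1 = p + t by omega,
            show t + u + (q + 1 + r) + (p + 1 + 1) - 1 = p + q + r + t + u + 1 + 1 by omega,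
            show p + 1 + 1 - 1 = p + 1 by omega,
            show t + u + (p + 1 + 1 + q) - 1 = p + q + t + u + 1 by omega,
            show p + 1 + 1 + q - (p + 1 + 1) = q by omega,
            show q + 1 + r + (p + 1 + 1) - (p + 1 + 1 + q) = r + 1 by omega,
            show q + 1 + r + (p + 1 + t) = p + q + r + t + 2 by omega,
            show p + 1 + t + 1 - (p + 1 + 1) = t by omega,
            show t + u + (p + 1 + 1) - (p + 1 + t) = u + 1 by omega,
            show t + u + (q + 1 + r) + (p + 1) - 1 = p + q + r + t + u + 1 by omega,
            show p + 1 - 1 = p by omega,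
            show p + 1 + 1 + q - (p + 1) = q + 1 by omega,
            show q + 1 + r + (p + 1) - (p + 1 + 1 + q) = r by omega,
            show p + 1 + t + 1 - (p + 1) = t + 1 by omega,
            show t + u + (p + 1) - (p + 1 + t) = u by omega]
          rw [Nat.factorial_succ (p + q + r + t + u + 1), Nat.factorial_succ p,
            Nat.factorial_succ r, Nat.factorial_succ u, Nat.factorial_succ q,
            Nat.factorial_succ t]
          push_cast
          rw [← mul_div_assoc, ← mul_div_assoc, div_eq_div_iff (by positivity) (by positivity)]
          ring
        · by_cases h4' : j ≤ b + s + 1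
          · obtain rfl : j = b + s + 1 := by omega
            rw [show Bq b c i (b + s + 1) s = 0 from Bq_zero (by omega)]
            push_cast
            ring
          · rw [show Bq b c i j (s + 1) = 0 from Bq_zero (by omega),
                show Bq b c i j s = 0 from Bq_zero (by omega)]
            ring
      · by_cases h3' : s ≤ j + 1
        · obtain rfl : s = j + 1 := by omega
          rw [show Bq b c i j (j + 1 + 1) = 0 from Bq_zero (by omega)]
          push_cast
          ring
        · rw [show Bq b c i j (s + 1) = 0 from Bq_zero (by omega),
              show Bq b c i j s = 0 from Bq_zero (by omega)]
          ring
    · by_cases h2' : i ≤ c + s + 1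
      · obtain rfl : i = c + s + 1 := by omega
        rw [show Bq b c (c + s + 1) j s = 0 from Bq_zero (by omega)]
        push_cast
        ring
      · rw [show Bq b c i j (s + 1) = 0 from Bq_zero (by omega),
            show Bq b c i j s = 0 from Bq_zero (by omega)]
        ring
  · by_cases h1' : s ≤ i
    · obtain rfl : i = s := by omega
      rw [show Bq b c i j (i + 1) = 0 from Bq_zero (by omega)]
      push_cast
      ring
    · rw [show Bq b c i j (s + 1) = 0 from Bq_zero (by omega),
          show Bq b c i j s = 0 from Bq_zero (by omega)]
      ring

lemma L2lem (b c i j s : ℕ) (hs : 1 ≤ s) (hsi : s ≤ i) (hsj : s ≤ j + 1) :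
    Afun b c i s * Cfun b c s j = ((c : ℚ) + j) * ((j : ℚ) + 1 - s) * Bq b c i j s := by
  by_cases hic : i ≤ c + s
  · by_cases hjb : j ≤ b + s
    · by_cases hsj' : s ≤ j
      · -- main case
        obtain ⟨p, rfl⟩ : ∃ p, s = p + 1 := ⟨s - 1, by omega⟩
        obtain ⟨q, rfl⟩ : ∃ q, i = p + 1 + q := ⟨i - (p + 1), by omega⟩
        obtain ⟨r, rfl⟩ : ∃ r, c = q + r := ⟨c - q, by omega⟩
        obtain ⟨t, rfl⟩ : ∃ t, j = p + 1 + t := ⟨j - (p + 1), by omega⟩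
        obtain ⟨u, rfl⟩ : ∃ u, b = t + u := ⟨b - t, by omega⟩
        rw [Afun_pos (by omega) (by omega), Cfun_pos (by omega) (by omega),
          Bq_pos (by omega) (by omega) (by omega) (by omega) (by omega)]
        rw [show p + 1 + q - 1 = p + q by omega,
          show t + u + (p + 1) - 1 = p + t + u by omega,
          show p + 1 - 1 = p by omega,
          show t + u + (p + 1 + q) - 1 = p + q + t + u by omega,
          show p + 1 + q - (p + 1) = q by omega,
          show q + r + (p + 1) - (p + 1 + q) = r by omega,
          show p + 1 + t - 1 = p + t by omega,
          show t + u + (q + r) + (p + 1) - 1 = p + q + r + t + u by omega,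
          show q + r + (p + 1 + t) - 1 = p + q + r + t by omega,
          show p + 1 + t - (p + 1) = t by omega,
          show t + u + (p + 1) - (p + 1 + t) = u by omega,
          show q + r + (p + 1 + t) = p + q + r + t + 1 by omega,
          show p + 1 + t + 1 - (p + 1) = t + 1 by omega]
        rw [Nat.factorial_succ (p + q + r + t), Nat.factorial_succ t]
        push_cast
        rw [div_mul_div_comm, ← mul_div_assoc, div_eq_div_iff (by positivity) (by positivity)]
        ring
      · -- s = j + 1
        obtain rfl : s = j + 1 := by omega
        rw [show Cfun b c (j + 1) j = 0 from Cfun_zero (by omega), mul_zero]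
        push_cast
        ring
    · rw [show Cfun b c s j = 0 from Cfun_zero (by omega),
        show Bq b c i j s = 0 from Bq_zero (by omega), mul_zero]
      ring
  · rw [show Afun b c i s = 0 from Afun_zero (by omega),
      show Bq b c i j s = 0 from Bq_zero (by omega), zero_mul]
    ring

set_option maxHeartbeats 1000000 in
lemma L1lem (b c i j s : ℕ) (hj : 1 ≤ j) (hs : 1 ≤ s) (hsi : s ≤ i) (hsj : s ≤ j + 1) :
    Afun b c i s * Cfun b c s (j + 1) = (j : ℚ) * ((s : ℚ) + b - j) * Bq b c i j s := by
  by_cases hic : i ≤ c + s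
  · by_cases hjb : j + 1 ≤ b + s
    · by_cases hsj' : s ≤ j
      · -- main case, s ≤ j
        obtain ⟨p, rfl⟩ : ∃ p, s = p + 1 := ⟨s - 1, by omega⟩
        obtain ⟨q, rfl⟩ : ∃ q, i = p + 1 + q := ⟨i - (p + 1), by omega⟩
        obtain ⟨r, rfl⟩ : ∃ r, c = q + r := ⟨c - q, by omega⟩
        obtain ⟨t, rfl⟩ : ∃ t, j = p + 1 + t := ⟨j - (p + 1), by omega⟩
        obtain ⟨u, rfl⟩ : ∃ u, b = t + 1 + u := ⟨b - (t + 1), by omega⟩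
        rw [Afun_pos (by omega) (by omega), Cfun_pos (by omega) (by omega),
          Bq_pos (by omega) (by omega) (by omega) (by omega) (by omega)]
        rw [show p + 1 + q - 1 = p + q by omega,
          show t + 1 + u + (p + 1) - 1 = p + t + u + 1 by omega,
          show p + 1 - 1 = p by omega,
          show t + 1 + u + (p + 1 + q) - 1 = p + q + t + u + 1 by omega,
          show p + 1 + q - (p + 1) = q by omega,
          show q + r + (p + 1) - (p + 1 + q) = r by omega,
          show p + 1 + t + 1 - 1 = p + t + 1 by omega,
          show t + 1 + u + (q + r) + (p + 1) - 1 = p + q + r + t + u + 1 by omega,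
          show q + r + (p + 1 + t + 1) - 1 = p + q + r + t + 1 by omega,
          show p + 1 + t + 1 - (p + 1) = t + 1 by omega,
          show t + 1 + u + (p + 1) - (p + 1 + t + 1) = u by omega,
          show p + 1 + t - 1 = p + t by omega,
          show q + r + (p + 1 + t) = p + q + r + t + 1 by omega,
          show t + 1 + u + (p + 1) - (p + 1 + t) = u + 1 by omega]
        rw [Nat.factorial_succ (p + t), Nat.factorial_succ u]
        push_cast
        rw [div_mul_div_comm, ← mul_div_assoc, div_eq_div_iff (by positivity) (by positivity)]
        ring
      · -- s = j + 1
        obtain rfl : s = j + 1 := by omega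
        obtain ⟨w, rfl⟩ : ∃ w, j = w + 1 := ⟨j - 1, by omega⟩
        obtain ⟨q, rfl⟩ : ∃ q, i = w + 1 + 1 + q := ⟨i - (w + 1 + 1), by omega⟩
        obtain ⟨r, rfl⟩ : ∃ r, c = q + r := ⟨c - q, by omega⟩
        rw [Afun_pos (by omega) (by omega), Cfun_pos (by omega) (by omega),
          Bq_pos (by omega) (by omega) (by omega) (by omega) (by omega)]
        rw [show w + 1 + 1 + q - 1 = w + q + 1 by omega,
          show b + (w + 1 + 1) - 1 = b + w + 1 by omega,
          show w + 1 + 1 - 1 = w + 1 by omega,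
          show b + (w + 1 + 1 + q) - 1 = b + w + q + 1 by omega,
          show w + 1 + 1 + q - (w + 1 + 1) = q by omega,
          show q + r + (w + 1 + 1) - (w + 1 + 1 + q) = r by omega,
          show b + (q + r) + (w + 1 + 1) - 1 = b + q + r + w + 1 by omega,
          show q + r + (w + 1 + 1) - 1 = q + r + w + 1 by omega,
          show w + 1 + 1 - (w + 1 + 1) = 0 by omega,
          show b + (w + 1 + 1) - (w + 1 + 1) = b by omega,
          show w + 1 - 1 = w by omega,
          show q + r + (w + 1) = q + r + w + 1 by omega,
          show b + (w + 1 + 1) - (w + 1) = b + 1 by omega]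
        simp only [Nat.factorial_succ w, Nat.factorial_succ b, Nat.factorial_zero]
        push_cast
        rw [div_mul_div_comm, ← mul_div_assoc, div_eq_div_iff (by positivity) (by positivity)]
        ring
    · by_cases hjb' : j ≤ b + s
      · -- j = b + s
        obtain rfl : j = b + s := by omega
        rw [show Cfun b c s (b + s + 1) = 0 from Cfun_zero (by omega), mul_zero]
        push_cast
        ring
      · rw [show Cfun b c s (j + 1) = 0 from Cfun_zero (by omega),
          show Bq b c i j s = 0 from Bq_zero (by omega), mul_zero]
        ring
  · rw [show Afun b c i s = 0 from Afun_zero (by omega),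
      show Bq b c i j s = 0 from Bq_zero (by omega), zero_mul]
    ring

noncomputable def Gfun (b c i j s : ℕ) : ℚ :=
  ((1 : ℚ) - s) * ((s : ℚ) + c - i) * ((s : ℚ) + b - j) * Bq b c i j s

lemma tele (f : ℕ → ℚ) (n : ℕ) :
    ∑ s ∈ Finset.Icc 1 n, (f (s + 1) - f s) = f (n + 1) - f 1 := by
  induction n with
  | zero => simp
  | succ n ih => rw [Finset.sum_Icc_succ_top (by omega), ih]; ring

/-- with `T(i,j) = ∑_{s=1}^{min(i,j)} A(b,c,i,s) ⬝ C(b,c,s,j)`,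
`(c-i+j+1) T(i,j+1) + (j-i-b) T(i,j) = 0`. -/
theorem statement_2 (b c : ℕ) (hb : 0 < b) (hc : 0 < c) (i j : ℕ) (hi : 0 < i) (hj : 0 < j) :
    ((c : ℚ) - i + j + 1) *
        (∑ s ∈ Finset.Icc 1 (min i (j + 1)), Afun b c i s * Cfun b c s (j + 1))
      + ((j : ℚ) - i - b) * (∑ s ∈ Finset.Icc 1 (min i j), Afun b c i s * Cfun b c s j)
      = 0 := by
  have hstep1 : ∑ s ∈ Finset.Icc 1 (min i j), Afun b c i s * Cfun b c s j
      = ∑ s ∈ Finset.Icc 1 (min i (j + 1)), Afun b c i s * Cfun b c s j := by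
    apply Finset.sum_subset
    · apply Finset.Icc_subset_Icc_right; omega
    · intro s hmem hnot
      simp only [Finset.mem_Icc] at hmem hnot
      have hsj : ¬ s ≤ j := by omega
      rw [show Cfun b c s j = 0 from Cfun_zero (by omega), mul_zero]
  rw [hstep1, Finset.mul_sum, Finset.mul_sum, ← Finset.sum_add_distrib]
  have key : ∀ s ∈ Finset.Icc 1 (min i (j + 1)),
      ((c : ℚ) - i + j + 1) * (Afun b c i s * Cfun b c s (j + 1))
        + ((j : ℚ) - i - b) * (Afun b c i s * Cfun b c s j)
      = Gfun b c i j (s + 1) - Gfun b c i j s := by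
    intro s hmem
    simp only [Finset.mem_Icc] at hmem
    have hs1 : 1 ≤ s := hmem.1
    have hsi : s ≤ i := by omega
    have hsj : s ≤ j + 1 := by omega
    rw [L1lem b c i j s hj hs1 hsi hsj, L2lem b c i j s hs1 hsi hsj]
    have hR := Rlem b c i j s hs1
    simp only [Gfun]
    push_cast
    linear_combination hR
  rw [Finset.sum_congr rfl key, tele (Gfun b c i j) (min i (j + 1))]
  have h1 : Gfun b c i j 1 = 0 := by simp [Gfun]
  have h2 : Gfun b c i j (min i (j + 1) + 1) = 0 := by
    rw [Gfun, Bq_zero (by omega), mul_zero]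
  rw [h1, h2, sub_zero]
end

section
/- Let $a,b,c$ be positive integers and $m,n,m',n'$ arbitrary integers. Define $(a+1)\times(a+1)$ matrices over $\mathbb{Q}$ as follows. $P$ has entries $P_{i,j} = \binom{b+c}{c+j-i}$ for $1\le i,j\le a$; $P_{i,a+1} = \binom{n}{m-i}$ for $1\le i\le a$; $P_{a+1,j} = \binom{n'}{j-m'}$ for $1\le j\le a$; and $P_{a+1,a+1} = \binom{n+n'-b-c}{m-m'-c}$. $L$ has entries $L_{i,j} = A(b,c,i,j)$ for $1\le i,j\le a$; $L_{a+1,j} = B_{b,c,n',m'}(j)$ for $1\le j\le a$; $L_{i,a+1} = 0$ for $1\le i\le a$; and $L_{a+1,a+1} = 1$. $U$ has entries $U_{i,j} = C(b,c,i,j)$ for $1\le i,j\le a$; $U_{i,a+1} = D_{b,c,n,m}(i)$ for $1\le i\le a$; $U_{a+1,j} = 0$ for $1\le j\le a$; and $U_{a+1,a+1} = \binom{n+n'-b-c}{m-m'-c} - \sum_{v=1}^{a} B_{b,c,n',m'}(v)\cdot D_{b,c,n,m}(v)$. Then $P = L\cdot U$. -/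
open Finset


noncomputable def ch (n k : ℤ) : ℚ :=
  if 0 ≤ k ∧ k ≤ n then ((n.toNat).choose k.toNat : ℚ) else 0

lemma fne (n : ℕ) : ((n.factorial : ℚ)) ≠ 0 := by exact_mod_cast n.factorial_pos.ne'

lemma ch_neg {n k : ℤ} (h : k < 0) : ch n k = 0 := by
  rw [ch, if_neg]; omega

lemma ch_lt {n k : ℤ} (h : n < k) : ch n k = 0 := by
  rw [ch, if_neg]; omega

lemma ch_cast (n k : ℕ) : ch (n : ℤ) (k : ℤ) = n.choose k := by
  by_cases h : k ≤ n
  · rw [ch, if_pos ⟨by omega, by exact_mod_cast h⟩]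
    simp
  · rw [ch, if_neg (by omega), Nat.choose_eq_zero_of_lt (by omega), Nat.cast_zero]

lemma ch_zero {n : ℤ} (hn : 0 ≤ n) : ch n 0 = 1 := by
  rw [ch, if_pos ⟨le_refl 0, hn⟩]; simp

lemma ibinom_eq_ch (n k : ℤ) :
    (if 0 ≤ k ∧ k ≤ n then
      ((Nat.factorial n.toNat : ℚ)) / (Nat.factorial (n - k).toNat * Nat.factorial k.toNat)
    else 0) = ch n k := by
  rw [ch]
  split
  · rename_i h
    rw [Nat.cast_choose ℚ (show k.toNat ≤ n.toNat by omega)]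
    rw [show (n - k).toNat = n.toNat - k.toNat by omega, mul_comm]
  · rfl

lemma ch_pascal {n : ℤ} (hn : 0 ≤ n) (k : ℤ) : ch (n + 1) k = ch n k + ch n (k - 1) := by
  rcases lt_or_ge k 0 with hk | hk
  · rw [ch_neg hk, ch_neg hk, ch_neg (by omega)]; ring
  rcases lt_or_ge (n + 1) k with hk2 | hk2
  · rw [ch_lt hk2, ch_lt (by omega), ch_lt (by omega)]; ring
  rcases eq_or_lt_of_le hk with h0 | h0
  · rw [← h0, ch_zero (by omega), ch_zero hn, ch_neg (by omega)]; ring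
  obtain ⟨K, hK⟩ : ∃ K : ℕ, k = (K : ℤ) + 1 := ⟨(k - 1).toNat, by omega⟩
  obtain ⟨N, hN⟩ : ∃ N : ℕ, n = (N : ℤ) := ⟨n.toNat, by omega⟩
  subst hK hN
  rw [show ((N : ℤ) + 1) = ((N + 1 : ℕ) : ℤ) by push_cast; ring,
      show ((K : ℤ) + 1) = ((K + 1 : ℕ) : ℤ) by push_cast; ring,
      show (((K + 1 : ℕ) : ℤ) - 1) = ((K : ℕ) : ℤ) by push_cast; ring,
      ch_cast, ch_cast, ch_cast, Nat.choose_succ_succ']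
  push_cast; ring


open Finset

-- generic: alternating binomial transform shift
lemma alt_shift (d : ℕ) (f : ℕ → ℚ) :
    ∑ t ∈ range (d + 2), (-1 : ℚ) ^ t * ((d + 1).choose t) * f t =
    ∑ t ∈ range (d + 1), (-1 : ℚ) ^ t * (d.choose t) * (f t - f (t + 1)) := by
  have h1 : ∑ t ∈ range (d + 2), (-1 : ℚ) ^ t * ((d + 1).choose t) * f t
      = (∑ t ∈ range (d + 1), (-1 : ℚ) ^ (t+1) * ((d + 1).choose (t+1)) * f (t+1)) + f 0 := by
    rw [Finset.sum_range_succ' (fun t => (-1 : ℚ) ^ t * ((d + 1).choose t) * f t) (d+1)]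
    simp
  have h2 : ∑ t ∈ range (d + 2), (-1 : ℚ) ^ t * (d.choose t) * f t
      = (∑ t ∈ range (d + 1), (-1 : ℚ) ^ (t+1) * (d.choose (t+1)) * f (t+1)) + f 0 := by
    rw [Finset.sum_range_succ' (fun t => (-1 : ℚ) ^ t * (d.choose t) * f t) (d+1)]
    simp
  have h3 : ∑ t ∈ range (d + 2), (-1 : ℚ) ^ t * (d.choose t) * f t
      = ∑ t ∈ range (d + 1), (-1 : ℚ) ^ t * (d.choose t) * f t := by
    rw [Finset.sum_range_succ]
    simp [Nat.choose_succ_self]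
  rw [h1]
  have h4 : ∀ t ∈ range (d+1), (-1 : ℚ) ^ (t+1) * ((d + 1).choose (t+1)) * f (t+1)
      = (-1 : ℚ) ^ (t+1) * (d.choose t) * f (t+1) + (-1 : ℚ) ^ (t+1) * (d.choose (t+1)) * f (t+1) := by
    intro t _
    rw [Nat.choose_succ_succ']
    push_cast; ring
  rw [Finset.sum_congr rfl h4, Finset.sum_add_distrib]
  have h5 : ∑ t ∈ range (d + 1), (-1 : ℚ) ^ (t+1) * (d.choose (t+1)) * f (t+1)
      = (∑ t ∈ range (d + 1), (-1 : ℚ) ^ t * (d.choose t) * f t) - f 0 := by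
    have := h2.symm.trans h3
    linarith [this]
  rw [h5]
  have h6 : ∑ t ∈ range (d + 1), (-1 : ℚ) ^ (t+1) * (d.choose t) * f (t+1)
      = - ∑ t ∈ range (d + 1), (-1 : ℚ) ^ t * (d.choose t) * f (t+1) := by
    rw [← Finset.sum_neg_distrib]
    apply Finset.sum_congr rfl; intro t _; ring
  rw [h6]
  simp only [mul_sub, Finset.sum_sub_distrib]
  ring

lemma fd_gen (d : ℕ) : ∀ x r : ℕ,
    ∑ t ∈ range (d + 1), (-1 : ℚ) ^ t * (d.choose t) * ((x + t).choose r) =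
    (-1 : ℚ) ^ d * (if d ≤ r then ((x.choose (r - d)) : ℚ) else 0) := by
  induction d with
  | zero => intro x r; simp
  | succ d ih =>
    intro x r
    rw [show d + 1 + 1 = d + 2 from rfl, alt_shift d (fun t => ((x + t).choose r : ℚ))]
    rcases Nat.eq_zero_or_pos r with hr | hr
    · subst hr
      have : ∀ t ∈ range (d+1), (-1 : ℚ) ^ t * (d.choose t) *
          (((x + t).choose 0 : ℚ) - ((x + (t+1)).choose 0 : ℚ)) = 0 := by
        intro t _; simp
      rw [Finset.sum_congr rfl this, Finset.sum_const_zero, if_neg (by omega)]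
      ring
    · obtain ⟨r', rfl⟩ : ∃ r', r = r' + 1 := ⟨r - 1, by omega⟩
      have key : ∀ t ∈ range (d+1), (-1 : ℚ) ^ t * (d.choose t) *
          (((x + t).choose (r'+1) : ℚ) - ((x + (t+1)).choose (r'+1) : ℚ)) =
          -((-1 : ℚ) ^ t * (d.choose t) * ((x + t).choose r' : ℚ)) := by
        intro t _
        have : (x + (t+1)).choose (r'+1) = (x+t).choose r' + (x+t).choose (r'+1) := by
          rw [show x + (t+1) = (x+t) + 1 by ring, Nat.choose_succ_succ']
        rw [this]
        push_cast; ring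
      rw [Finset.sum_congr rfl key, Finset.sum_neg_distrib, ih x r']
      by_cases h : d ≤ r'
      · rw [if_pos h, if_pos (by omega), show r' + 1 - (d + 1) = r' - d by omega]
        ring
      · rw [if_neg h, if_neg (by omega)]
        ring

lemma fd {d r : ℕ} (x : ℕ) (h : r < d) :
    ∑ t ∈ range (d + 1), (-1 : ℚ) ^ t * (d.choose t) * ((x + t).choose r) = 0 := by
  rw [fd_gen, if_neg (by omega), mul_zero]

noncomputable def Lsum (b c : ℕ) (p q : ℤ) : ℚ :=
  ∑ k ∈ range (p.toNat + 1),
    ch ((b : ℤ) + c + k) k * ch (c : ℤ) (p - k) * ch (b : ℤ) (q - k)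

lemma Lsum_p_neg {b c : ℕ} {p : ℤ} (q : ℤ) (h : p < 0) : Lsum b c p q = 0 := by
  apply Finset.sum_eq_zero
  intro k _
  rw [ch_neg (show p - (k : ℤ) < 0 by omega)]
  ring

lemma Lsum_rec (b c : ℕ) (p q : ℤ) (hp : 0 ≤ p) :
    Lsum (b + 1) c p q = Lsum b c p q + Lsum b c p (q - 1) + Lsum (b + 1) c (p - 1) (q - 1) := by
  have hsplit : ∀ k ∈ range (p.toNat + 1),
      ch (((b + 1 : ℕ) : ℤ) + c + k) k * ch (c : ℤ) (p - k) * ch ((b + 1 : ℕ) : ℤ) (q - k)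
      = (ch ((b : ℤ) + c + k) k * ch (c : ℤ) (p - k) * ch (b : ℤ) (q - k)
          + ch ((b : ℤ) + c + k) k * ch (c : ℤ) (p - k) * ch (b : ℤ) (q - 1 - k))
        + ch ((b : ℤ) + c + k) (k - 1) * ch (c : ℤ) (p - k) * ch ((b + 1 : ℕ) : ℤ) (q - k) := by
    intro k _
    have hx : ch (((b + 1 : ℕ) : ℤ) + c + k) k
        = ch ((b : ℤ) + c + k) k + ch ((b : ℤ) + c + k) (k - 1) := by
      rw [show (((b + 1 : ℕ) : ℤ) + c + k) = ((b : ℤ) + c + k) + 1 by push_cast; ring]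
      exact ch_pascal (by positivity) (k : ℤ)
    have hw : ch ((b + 1 : ℕ) : ℤ) (q - k) = ch (b : ℤ) (q - k) + ch (b : ℤ) (q - 1 - k) := by
      rw [show ((b + 1 : ℕ) : ℤ) = (b : ℤ) + 1 by push_cast; ring,
        ch_pascal (by positivity) (q - k), show q - (k:ℤ) - 1 = q - 1 - k by ring]
    rw [hx, hw]; ring
  have h3 : ∑ k ∈ range (p.toNat + 1),
      ch ((b : ℤ) + c + k) ((k : ℤ) - 1) * ch (c : ℤ) (p - k) * ch ((b + 1 : ℕ) : ℤ) (q - k)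
      = Lsum (b + 1) c (p - 1) (q - 1) := by
    rw [Finset.sum_range_succ'
      (fun k => ch ((b : ℤ) + c + k) ((k : ℤ) - 1) * ch (c : ℤ) (p - k) * ch ((b + 1 : ℕ) : ℤ) (q - k))
      p.toNat]
    have h0 : ch ((b : ℤ) + c + ((0:ℕ):ℤ)) (((0:ℕ):ℤ) - 1) * ch (c : ℤ) (p - ((0:ℕ):ℤ)) *
        ch ((b + 1 : ℕ) : ℤ) (q - ((0:ℕ):ℤ)) = 0 := by
      rw [ch_neg (show ((0:ℕ) : ℤ) - 1 < 0 by norm_num)]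
      ring
    rw [h0, add_zero]
    rcases eq_or_lt_of_le hp with h | h
    · rw [show p.toNat = 0 by omega, Finset.range_zero, Finset.sum_empty]
      rw [Lsum_p_neg (q-1) (by omega)]
    · rw [Lsum]
      rw [show (p - 1).toNat + 1 = p.toNat by omega]
      apply Finset.sum_congr rfl
      intro k _
      have e1 : ((b + 1 : ℕ) : ℤ) + c + k = (b : ℤ) + c + ((k + 1 : ℕ) : ℤ) := by push_cast; ring
      have e2 : ((k + 1 : ℕ) : ℤ) - 1 = (k : ℤ) := by push_cast; ring
      have e3 : p - 1 - (k : ℤ) = p - ((k + 1 : ℕ) : ℤ) := by push_cast; ring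
      have e4 : q - 1 - (k : ℤ) = q - ((k + 1 : ℕ) : ℤ) := by push_cast; ring
      rw [e1, e2, e3, e4]
  rw [Lsum, Finset.sum_congr rfl hsplit, Finset.sum_add_distrib, Finset.sum_add_distrib, h3]
  simp only [Lsum]

lemma prod_base (c : ℕ) (p q : ℤ) (hq : 0 ≤ q) (hqp : q ≤ p) :
    ch ((c : ℤ) + q) q * ch (c : ℤ) (p - q) = ch p q * ch ((c : ℤ) + q) p := by
  rcases lt_or_ge ((c : ℤ) + q) p with h | h
  · rw [ch_lt (show (c:ℤ) < p - q by omega), ch_lt h]; ring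
  · obtain ⟨P, rfl⟩ : ∃ P : ℕ, p = (P : ℤ) := ⟨p.toNat, by omega⟩
    obtain ⟨Q, rfl⟩ : ∃ Q : ℕ, q = (Q : ℤ) := ⟨q.toNat, by omega⟩
    rw [show (c : ℤ) + Q = ((c + Q : ℕ) : ℤ) by push_cast; ring,
        show ((P : ℤ) - Q) = ((P - Q : ℕ) : ℤ) by omega,
        ch_cast, ch_cast, ch_cast, ch_cast]
    rw [Nat.cast_choose ℚ (show Q ≤ c + Q by omega),
        Nat.cast_choose ℚ (show P - Q ≤ c by omega),
        Nat.cast_choose ℚ (show Q ≤ P by exact_mod_cast hqp),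
        Nat.cast_choose ℚ (show P ≤ c + Q by exact_mod_cast h)]
    rw [show c + Q - Q = c by omega, show c - (P - Q) = c + Q - P by omega]
    field_simp [fne]

lemma star (b c : ℕ) : ∀ p q : ℤ, Lsum b c p q = ch ((b : ℤ) + p) q * ch ((c : ℤ) + q) p := by
  induction b with
  | zero =>
    intro p q
    simp only [Lsum, Nat.cast_zero, zero_add]
    rcases lt_or_ge q 0 with hq | hq
    · rw [ch_neg hq, Finset.sum_eq_zero]
      · ring
      · intro k _
        rw [ch_neg (show q - (k:ℤ) < 0 by omega)]; ring
    rcases lt_or_ge p q with hpq | hpq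
    · rw [ch_lt (show p < q by omega), Finset.sum_eq_zero]
      · ring
      · intro k hk
        simp only [Finset.mem_range] at hk
        rcases lt_or_ge (p - (k:ℤ)) 0 with h | h
        · rw [ch_neg h]; ring
        · rw [ch_lt (show (0:ℤ) < q - k by omega)]; ring
    · rw [Finset.sum_eq_single q.toNat]
      · rw [show ((q.toNat : ℕ):ℤ) = q by omega, sub_self, ch_zero (le_refl 0), mul_one]
        exact prod_base c p q hq hpq
      · intro k _ hk
        rcases lt_or_ge (q - (k:ℤ)) 0 with h | h
        · rw [ch_neg h]; ring
        · rw [ch_lt (show (0:ℤ) < q - k by omega)]; ring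
      · intro h
        exfalso; apply h
        simp only [Finset.mem_range]
        omega
  | succ b ih =>
    suffices H : ∀ N : ℕ, ∀ p q : ℤ, p < N →
        Lsum (b + 1) c p q = ch (((b + 1 : ℕ) : ℤ) + p) q * ch ((c : ℤ) + q) p by
      intro p q
      exact H (p.toNat + 1) p q (by omega)
    intro N
    induction N with
    | zero =>
      intro p q hp
      rw [Lsum_p_neg q (by omega), ch_neg (show p < 0 by omega)]
      ring
    | succ N ihN =>
      intro p q hp
      rcases lt_or_ge p (N : ℤ) with h | h
      · exact ihN p q h
      have hp0 : (0:ℤ) ≤ p := by omega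
      rcases lt_or_ge q 0 with hq | hq
      · rw [ch_neg hq, Lsum, Finset.sum_eq_zero]
        · ring
        · intro k _
          rw [ch_neg (show q - (k:ℤ) < 0 by omega)]; ring
      rcases eq_or_lt_of_le hq with hq0 | hq0
      · -- q = 0
        rw [← hq0, ch_zero (by omega), one_mul, add_zero, Lsum, Finset.sum_eq_single 0]
        · rw [show (((0:ℕ)):ℤ) = (0:ℤ) by norm_num, sub_zero, sub_zero, add_zero,
            ch_zero (by positivity), ch_zero (by positivity)]
          ring
        · intro k _ hk
          rw [ch_neg (show (0:ℤ) - (k:ℤ) < 0 by omega)]; ring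
        · intro h'
          exfalso; apply h'
          simp only [Finset.mem_range]; omega
      · -- q ≥ 1
        rw [Lsum_rec b c p q hp0, ih p q, ih p (q - 1), ihN (p - 1) (q - 1) (by omega)]
        have E1 : ch (((b+1:ℕ)):ℤ) ((p-1)) = ch (((b+1:ℕ)):ℤ) ((p-1)) := rfl
        have E2 : ch (((b+1:ℕ):ℤ) + (p-1)) (q-1) = ch ((b:ℤ) + p) (q-1) := by
          rw [show ((b+1:ℕ):ℤ) + (p-1) = (b:ℤ) + p by push_cast; ring]
        have E3 : ch (((b+1:ℕ):ℤ) + p) q = ch ((b:ℤ) + p) q + ch ((b:ℤ) + p) (q-1) := by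
          rw [show ((b+1:ℕ):ℤ) + p = ((b:ℤ) + p) + 1 by push_cast; ring]
          exact ch_pascal (by omega) q
        have E4 : ch ((c:ℤ) + q) p = ch ((c:ℤ) + (q-1)) p + ch ((c:ℤ) + (q-1)) (p-1) := by
          rw [show (c:ℤ) + q = ((c:ℤ) + (q-1)) + 1 by ring]
          exact ch_pascal (by omega) p
        rw [E2, E3, E4]
        ring


noncomputable def Mfun (b c i v : ℕ) : ℚ :=
  if 1 ≤ v ∧ v ≤ i then
    (-1 : ℚ) ^ (i - v) *
    ((Nat.factorial (i - 1) * Nat.factorial (b + v - 1) * Nat.factorial (c + i - v - 1) : ℚ) /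
      (Nat.factorial (c - 1) * Nat.factorial (v - 1) * Nat.factorial (b + i - 1) *
        Nat.factorial (i - v)))
  else 0

noncomputable def Nfun (b c j v : ℕ) : ℚ :=
  if 1 ≤ v ∧ v ≤ j then
    (-1 : ℚ) ^ (j - v) *
    ((Nat.factorial (b + j - 1) * Nat.factorial (c + v - 1) * Nat.factorial (b + j - v - 1) : ℚ) /
      (Nat.factorial (b - 1) * Nat.factorial (v - 1) * Nat.factorial (j - v) *
        Nat.factorial (b + c + j - 1)))
  else 0


lemma AM_diag (b c i : ℕ) (hi : 1 ≤ i) : Afun b c i i * Mfun b c i i = 1 := by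
  rw [Afun, if_pos ⟨le_refl i, by omega⟩, Mfun, if_pos ⟨hi, le_refl i⟩,
      Nat.sub_self, pow_zero, one_mul,
      show c + i - i - 1 = c - 1 by omega, show c + i - i = c by omega, Nat.factorial_zero]
  field_simp [fne]
  ring

lemma NC_diag (b c j : ℕ) (hj : 1 ≤ j) : Nfun b c j j * Cfun b c j j = 1 := by
  rw [Cfun, if_pos ⟨le_refl j, by omega⟩, Nfun, if_pos ⟨hj, le_refl j⟩,
      Nat.sub_self, pow_zero, one_mul,
      show b + j - j - 1 = b - 1 by omega, show b + j - j = b by omega, Nat.factorial_zero]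
  field_simp [fne]
  ring

lemma AM_off (b c i v t : ℕ) (hc : 1 ≤ c) (hv : 1 ≤ v) (hvi : v < i) (ht : t ≤ i - v) :
    Afun b c i (v + t) * Mfun b c (v + t) v =
      ((Nat.factorial c * Nat.factorial (i-1) * Nat.factorial (b+v-1) *
          Nat.factorial (i-v-1) : ℚ) /
       (Nat.factorial (b+i-1) * Nat.factorial (c-1) * Nat.factorial (v-1) *
          Nat.factorial (i-v)))
      * ((-1:ℚ)^t * (((i-v).choose t : ℕ) : ℚ) * (((c-1+t).choose (i-v-1) : ℕ) : ℚ)) := by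
  rw [Mfun, if_pos ⟨hv, by omega⟩, show v + t - v = t by omega]
  by_cases h2 : i ≤ c + (v + t)
  · rw [Afun, if_pos ⟨by omega, h2⟩]
    rw [Nat.cast_choose ℚ (show t ≤ i - v by omega),
        Nat.cast_choose ℚ (show i - v - 1 ≤ c - 1 + t by omega)]
    rw [show c + (v + t) - v - 1 = c - 1 + t by omega,
        show i - (v + t) = i - v - t by omega,
        show c + (v + t) - i = c - 1 + t - (i - v - 1) by omega,
        show v + t - 1 = v + t - 1 from rfl]
    field_simp [fne]
  · rw [Afun, if_neg (by omega),
        Nat.choose_eq_zero_of_lt (show c - 1 + t < i - v - 1 by omega), Nat.cast_zero]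
    ring

lemma NC_off (b c j v t : ℕ) (hb : 1 ≤ b) (hv : 1 ≤ v) (hvj : v < j) (ht : t ≤ j - v) :
    Nfun b c (v + t) v * Cfun b c (v + t) j =
      ((Nat.factorial b * Nat.factorial (c+v-1) * Nat.factorial (j-1) *
          Nat.factorial (j-v-1) : ℚ) /
       (Nat.factorial (b-1) * Nat.factorial (v-1) * Nat.factorial (c+j-1) *
          Nat.factorial (j-v)))
      * ((-1:ℚ)^t * (((j-v).choose t : ℕ) : ℚ) * (((b-1+t).choose (j-v-1) : ℕ) : ℚ)) := by
  rw [Nfun, if_pos ⟨hv, by omega⟩, show v + t - v = t by omega]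
  by_cases h2 : j ≤ b + (v + t)
  · rw [Cfun, if_pos ⟨by omega, h2⟩]
    rw [Nat.cast_choose ℚ (show t ≤ j - v by omega),
        Nat.cast_choose ℚ (show j - v - 1 ≤ b - 1 + t by omega)]
    rw [show b + (v + t) - v - 1 = b - 1 + t by omega,
        show j - (v + t) = j - v - t by omega,
        show b + (v + t) - j = b - 1 + t - (j - v - 1) by omega]
    field_simp [fne]
  · rw [Cfun, if_neg (by omega),
        Nat.choose_eq_zero_of_lt (show b - 1 + t < j - v - 1 by omega), Nat.cast_zero]
    ring


lemma AC_pt (b c i j t : ℕ) (hi : 1 ≤ i) (hj : 1 ≤ j) :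
    Afun b c i (1 + t) * Cfun b c (1 + t) j =
      ((Nat.factorial (i-1) * Nat.factorial (j-1) * Nat.factorial (b+c) : ℚ) /
        (Nat.factorial (b+i-1) * Nat.factorial (c+j-1)))
      * (ch ((b : ℤ) + c + t) t * ch (c : ℤ) (((i:ℤ)-1) - t) * ch (b : ℤ) (((j:ℤ)-1) - t)) := by
  rcases lt_or_ge (i - 1 : ℤ) t with h | h
  · rw [Afun, if_neg (by omega), ch_neg (show ((i:ℤ)-1) - t < 0 by omega)]
    ring
  rcases lt_or_ge (j - 1 : ℤ) t with h' | h'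
  · rw [Cfun, if_neg (by omega), ch_neg (show ((j:ℤ)-1) - t < 0 by omega)]
    ring
  -- t ≤ i-1 and t ≤ j-1
  rw [show (b : ℤ) + c + t = ((b + c + t : ℕ) : ℤ) by push_cast; ring,
      show ((i:ℤ)-1) - t = ((i - 1 - t : ℕ) : ℤ) by omega,
      show ((j:ℤ)-1) - t = ((j - 1 - t : ℕ) : ℤ) by omega,
      show (c : ℤ) = ((c : ℕ) : ℤ) from rfl, show (b : ℤ) = ((b : ℕ) : ℤ) from rfl,
      ch_cast, ch_cast, ch_cast]
  by_cases h2 : i ≤ c + (1 + t)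
  · by_cases h3 : j ≤ b + (1 + t)
    · rw [Afun, if_pos ⟨by omega, h2⟩, Cfun, if_pos ⟨by omega, h3⟩]
      rw [Nat.cast_choose ℚ (show t ≤ b + c + t by omega),
          Nat.cast_choose ℚ (show i - 1 - t ≤ c by omega),
          Nat.cast_choose ℚ (show j - 1 - t ≤ b by omega)]
      rw [show b + c + t - t = b + c by omega,
          show c - (i - 1 - t) = c + (1 + t) - i by omega,
          show b - (j - 1 - t) = b + (1 + t) - j by omega,
          show b + c + (1 + t) - 1 = b + c + t by omega,
          show i - (1 + t) = i - 1 - t by omega,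
          show j - (1 + t) = j - 1 - t by omega,
          show (1 + t) - 1 = t by omega]
      field_simp [fne]
    · rw [Cfun, if_neg (by omega),
          Nat.choose_eq_zero_of_lt (show b < j - 1 - t by omega), Nat.cast_zero]
      ring
  · rw [Afun, if_neg (by omega),
        Nat.choose_eq_zero_of_lt (show c < i - 1 - t by omega), Nat.cast_zero]
    ring

lemma final_prod (b c i j : ℕ) (hi : 1 ≤ i) (hj : 1 ≤ j) :
    ((Nat.factorial (i-1) * Nat.factorial (j-1) * Nat.factorial (b+c) : ℚ) /
      (Nat.factorial (b+i-1) * Nat.factorial (c+j-1)))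
    * (ch ((b:ℤ) + ((i:ℤ)-1)) ((j:ℤ)-1) * ch ((c:ℤ) + ((j:ℤ)-1)) ((i:ℤ)-1))
    = ch ((b:ℤ) + (c:ℤ)) ((c:ℤ) + (j:ℤ) - (i:ℤ)) := by
  rw [show (b:ℤ) + ((i:ℤ)-1) = ((b + i - 1 : ℕ) : ℤ) by omega,
      show (c:ℤ) + ((j:ℤ)-1) = ((c + j - 1 : ℕ) : ℤ) by omega,
      show ((j:ℤ)-1) = ((j - 1 : ℕ) : ℤ) by omega,
      show ((i:ℤ)-1) = ((i - 1 : ℕ) : ℤ) by omega,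
      ch_cast, ch_cast]
  by_cases h1 : j ≤ b + i
  · by_cases h2 : i ≤ c + j
    · rw [show (b:ℤ) + (c:ℤ) = ((b + c : ℕ) : ℤ) by omega,
          show (c:ℤ) + (j:ℤ) - (i:ℤ) = ((c + j - i : ℕ) : ℤ) by omega, ch_cast]
      rw [Nat.cast_choose ℚ (show j - 1 ≤ b + i - 1 by omega),
          Nat.cast_choose ℚ (show i - 1 ≤ c + j - 1 by omega),
          Nat.cast_choose ℚ (show c + j - i ≤ b + c by omega)]
      rw [show b + i - 1 - (j - 1) = b + i - j by omega,
          show c + j - 1 - (i - 1) = c + j - i by omega,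
          show b + c - (c + j - i) = b + i - j by omega]
      field_simp [fne]
    · rw [Nat.choose_eq_zero_of_lt (show c + j - 1 < i - 1 by omega), Nat.cast_zero,
          ch_neg (show (c:ℤ) + (j:ℤ) - (i:ℤ) < 0 by omega)]
      ring
  · rw [Nat.choose_eq_zero_of_lt (show b + i - 1 < j - 1 by omega), Nat.cast_zero,
        ch_lt (show (b:ℤ) + (c:ℤ) < (c:ℤ) + (j:ℤ) - (i:ℤ) by omega)]
    ring


lemma K1 (a b c : ℕ) (hc : 1 ≤ c) (i v : ℕ) (hi1 : 1 ≤ i) (hia : i ≤ a)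
    (hv1 : 1 ≤ v) (hva : v ≤ a) :
    ∑ k ∈ Icc 1 a, Afun b c i k * Mfun b c k v = if i = v then 1 else 0 := by
  rcases lt_trichotomy i v with h | h | h
  · rw [if_neg (by omega)]
    apply Finset.sum_eq_zero
    intro k hk
    rcases lt_or_ge k v with hkv | hkv
    · rw [Mfun, if_neg (by omega)]; ring
    · rw [Afun, if_neg (by omega)]; ring
  · rw [if_pos h, ← h]
    rw [Finset.sum_eq_single_of_mem i (by simp only [Finset.mem_Icc]; omega)]
    · exact AM_diag b c i hi1
    · intro k _ hk
      rcases lt_or_ge k i with hki | hki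
      · rw [Mfun, if_neg (by omega)]; ring
      · rw [Afun, if_neg (by omega)]; ring
  · rw [if_neg (by omega)]
    rw [← Finset.sum_subset (show Icc v i ⊆ Icc 1 a by
        apply Finset.Icc_subset_Icc <;> omega)
      (by
        intro k hk hk2
        simp only [Finset.mem_Icc] at hk hk2
        rcases lt_or_ge k v with hkv | hkv
        · rw [Mfun, if_neg (by omega)]; ring
        · rw [Afun, if_neg (by omega)]; ring)]
    rw [← Finset.Ico_add_one_right_eq_Icc, Finset.sum_Ico_eq_sum_range]
    have hpt : ∀ t ∈ range (i + 1 - v), Afun b c i (v + t) * Mfun b c (v + t) v =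
        ((Nat.factorial c * Nat.factorial (i-1) * Nat.factorial (b+v-1) *
            Nat.factorial (i-v-1) : ℚ) /
         (Nat.factorial (b+i-1) * Nat.factorial (c-1) * Nat.factorial (v-1) *
            Nat.factorial (i-v)))
        * ((-1:ℚ)^t * (((i-v).choose t : ℕ) : ℚ) * (((c-1+t).choose (i-v-1) : ℕ) : ℚ)) := by
      intro t ht
      simp only [Finset.mem_range] at ht
      exact AM_off b c i v t hc hv1 h (by omega)
    rw [Finset.sum_congr rfl hpt, ← Finset.mul_sum,
        show i + 1 - v = (i - v) + 1 by omega,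
        fd (c-1) (show i - v - 1 < i - v by omega), mul_zero]

lemma K2 (a b c : ℕ) (hb : 1 ≤ b) (j v : ℕ) (hj1 : 1 ≤ j) (hja : j ≤ a)
    (hv1 : 1 ≤ v) (hva : v ≤ a) :
    ∑ k ∈ Icc 1 a, Nfun b c k v * Cfun b c k j = if v = j then 1 else 0 := by
  rcases lt_trichotomy j v with h | h | h
  · rw [if_neg (by omega)]
    apply Finset.sum_eq_zero
    intro k hk
    rcases lt_or_ge k v with hkv | hkv
    · rw [Nfun, if_neg (by omega)]; ring
    · rw [Cfun, if_neg (by omega)]; ring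
  · rw [if_pos (by omega)]
    subst h
    rw [Finset.sum_eq_single_of_mem j (by simp only [Finset.mem_Icc]; omega)]
    · exact NC_diag b c j hj1
    · intro k _ hk
      rcases lt_or_ge k j with hkv | hkv
      · rw [Nfun, if_neg (by omega)]; ring
      · rw [Cfun, if_neg (by omega), mul_zero]
  · rw [if_neg (by omega)]
    rw [← Finset.sum_subset (show Icc v j ⊆ Icc 1 a by
        apply Finset.Icc_subset_Icc <;> omega)
      (by
        intro k hk hk2
        simp only [Finset.mem_Icc] at hk hk2
        rcases lt_or_ge k v with hkv | hkv
        · rw [Nfun, if_neg (by omega)]; ring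
        · rw [Cfun, if_neg (by omega)]; ring)]
    rw [← Finset.Ico_add_one_right_eq_Icc, Finset.sum_Ico_eq_sum_range]
    have hpt : ∀ t ∈ range (j + 1 - v), Nfun b c (v + t) v * Cfun b c (v + t) j =
        ((Nat.factorial b * Nat.factorial (c+v-1) * Nat.factorial (j-1) *
            Nat.factorial (j-v-1) : ℚ) /
         (Nat.factorial (b-1) * Nat.factorial (v-1) * Nat.factorial (c+j-1) *
            Nat.factorial (j-v)))
        * ((-1:ℚ)^t * (((j-v).choose t : ℕ) : ℚ) * (((b-1+t).choose (j-v-1) : ℕ) : ℚ)) := by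
      intro t ht
      simp only [Finset.mem_range] at ht
      exact NC_off b c j v t hb hv1 h (by omega)
    rw [Finset.sum_congr rfl hpt, ← Finset.mul_sum,
        show j + 1 - v = (j - v) + 1 by omega,
        fd (b-1) (show j - v - 1 < j - v by omega), mul_zero]

lemma K3 (a b c : ℕ) (i j : ℕ) (hi1 : 1 ≤ i) (hia : i ≤ a) (hj1 : 1 ≤ j) :
    ∑ k ∈ Icc 1 a, Afun b c i k * Cfun b c k j = ch ((b:ℤ) + (c:ℤ)) ((c:ℤ) + (j:ℤ) - (i:ℤ)) := by
  rw [← Finset.Ico_add_one_right_eq_Icc, Finset.sum_Ico_eq_sum_range, show a + 1 - 1 = a by omega]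
  have hpt : ∀ t ∈ range a, Afun b c i (1 + t) * Cfun b c (1 + t) j =
      ((Nat.factorial (i-1) * Nat.factorial (j-1) * Nat.factorial (b+c) : ℚ) /
        (Nat.factorial (b+i-1) * Nat.factorial (c+j-1)))
      * (ch ((b : ℤ) + c + t) t * ch (c : ℤ) (((i:ℤ)-1) - t) * ch (b : ℤ) (((j:ℤ)-1) - t)) :=
    fun t _ => AC_pt b c i j t hi1 hj1
  rw [Finset.sum_congr rfl hpt, ← Finset.mul_sum]
  have hsum : ∑ t ∈ range a,
      ch ((b : ℤ) + c + t) t * ch (c : ℤ) (((i:ℤ)-1) - t) * ch (b : ℤ) (((j:ℤ)-1) - t)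
      = Lsum b c ((i:ℤ)-1) ((j:ℤ)-1) := by
    rw [Lsum, show ((i:ℤ)-1).toNat + 1 = i by omega]
    exact (Finset.sum_subset (Finset.range_subset_range.mpr hia)
      (by
        intro t ht ht2
        simp only [Finset.mem_range] at ht ht2
        rw [ch_neg (show ((i:ℤ)-1) - t < 0 by omega)]
        ring)).symm
  rw [hsum, star b c ((i:ℤ)-1) ((j:ℤ)-1)]
  exact final_prod b c i j hi1 hj1

lemma ibinom_ch (n k : ℤ) : ibinom n k = ch n k := by
  rw [ibinom]; exact ibinom_eq_ch n k

lemma Dfun_eq (b c : ℕ) (n m : ℤ) (i : ℕ) :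
    Dfun b c n m i = ∑ v ∈ Icc 1 i, Mfun b c i v * ibinom n (m - v) := by
  rw [Dfun]
  apply Finset.sum_congr rfl
  intro v hv
  simp only [Finset.mem_Icc] at hv
  rw [Mfun, if_pos ⟨hv.1, hv.2⟩]

lemma Bfun_eq (b c : ℕ) (n' m' : ℤ) (j : ℕ) :
    Bfun b c n' m' j = ∑ v ∈ Icc 1 j, Nfun b c j v * ibinom n' (v - m') := by
  rw [Bfun]
  apply Finset.sum_congr rfl
  intro v hv
  simp only [Finset.mem_Icc] at hv
  rw [Nfun, if_pos ⟨hv.1, hv.2⟩]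

lemma case2 (a b c : ℕ) (hc : 1 ≤ c) (n m : ℤ) (i : ℕ) (hi1 : 1 ≤ i) (hia : i ≤ a) :
    ∑ k ∈ Icc 1 a, Afun b c i k * Dfun b c n m k = ibinom n (m - (i : ℕ)) := by
  have hpad : ∀ k ∈ Icc 1 a, Afun b c i k * Dfun b c n m k
      = ∑ v ∈ Icc 1 a, (Afun b c i k * Mfun b c k v) * ibinom n (m - v) := by
    intro k hk
    simp only [Finset.mem_Icc] at hk
    rw [Dfun_eq, Finset.sum_subset (Finset.Icc_subset_Icc (le_refl 1) hk.2)
      (fun v hv hv2 => by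
        simp only [Finset.mem_Icc] at hv hv2
        rw [Mfun, if_neg (by omega)]; ring), Finset.mul_sum]
    exact Finset.sum_congr rfl (fun v _ => (mul_assoc _ _ _).symm)
  rw [Finset.sum_congr rfl hpad, Finset.sum_comm]
  have h2 : ∀ v ∈ Icc 1 a, (∑ k ∈ Icc 1 a, (Afun b c i k * Mfun b c k v) * ibinom n (m - v))
      = (if i = v then 1 else 0) * ibinom n (m - v) := by
    intro v hv
    simp only [Finset.mem_Icc] at hv
    rw [← Finset.sum_mul, K1 a b c hc i v hi1 hia hv.1 hv.2]
  rw [Finset.sum_congr rfl h2]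
  simp only [ite_mul, one_mul, zero_mul]
  rw [Finset.sum_ite_eq (Icc 1 a) i (fun v => ibinom n (m - (v : ℕ))),
    if_pos (by simp only [Finset.mem_Icc]; omega)]

lemma case3 (a b c : ℕ) (hb : 1 ≤ b) (n' m' : ℤ) (j : ℕ) (hj1 : 1 ≤ j) (hja : j ≤ a) :
    ∑ k ∈ Icc 1 a, Bfun b c n' m' k * Cfun b c k j = ibinom n' ((j : ℕ) - m') := by
  have hpad : ∀ k ∈ Icc 1 a, Bfun b c n' m' k * Cfun b c k j
      = ∑ v ∈ Icc 1 a, (Nfun b c k v * Cfun b c k j) * ibinom n' (v - m') := by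
    intro k hk
    simp only [Finset.mem_Icc] at hk
    rw [Bfun_eq, Finset.sum_subset (Finset.Icc_subset_Icc (le_refl 1) hk.2)
      (fun v hv hv2 => by
        simp only [Finset.mem_Icc] at hv hv2
        rw [Nfun, if_neg (by omega)]; ring), Finset.sum_mul]
    exact Finset.sum_congr rfl (fun v _ => by ring)
  rw [Finset.sum_congr rfl hpad, Finset.sum_comm]
  have h2 : ∀ v ∈ Icc 1 a, (∑ k ∈ Icc 1 a, (Nfun b c k v * Cfun b c k j) * ibinom n' (v - m'))
      = (if v = j then 1 else 0) * ibinom n' (v - m') := by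
    intro v hv
    simp only [Finset.mem_Icc] at hv
    rw [← Finset.sum_mul, K2 a b c hb j v hj1 hja hv.1 hv.2]
  rw [Finset.sum_congr rfl h2]
  simp only [ite_mul, one_mul, zero_mul]
  rw [Finset.sum_ite_eq' (Icc 1 a) j (fun v => ibinom n' ((v : ℕ) - m')),
    if_pos (by simp only [Finset.mem_Icc]; omega)]

lemma fin_sum_to_Icc (a : ℕ) (f : ℕ → ℚ) :
    (∑ k : Fin a, f ((k : ℕ) + 1)) = ∑ k ∈ Icc 1 a, f k := by
  rw [Fin.sum_univ_eq_sum_range (fun k => f (k + 1)) a, ← Finset.Ico_add_one_right_eq_Icc,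
      Finset.sum_Ico_eq_sum_range, show a + 1 - 1 = a by omega]
  exact Finset.sum_congr rfl (fun t _ => by rw [add_comm])


/-- the LU-decomposition `P = L ⬝ U` of the lattice path matrix
(indices of `Fin (a+1)` are 0-based, so the 1-based index is `↑i + 1`). -/
theorem statement_5 (a b c : ℕ) (ha : 0 < a) (hb : 0 < b) (hc : 0 < c) (m n m' n' : ℤ) :
    (Matrix.of fun i j : Fin (a + 1) =>
      if (i : ℕ) < a then
        if (j : ℕ) < a then ibinom ((b : ℤ) + c) ((c : ℤ) + ((j : ℕ) + 1) - ((i : ℕ) + 1))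
        else ibinom n (m - ((i : ℕ) + 1))
      else
        if (j : ℕ) < a then ibinom n' ((((j : ℕ) : ℤ) + 1) - m')
        else ibinom (n + n' - b - c) (m - m' - c))
    =
    (Matrix.of fun i j : Fin (a + 1) =>
      if (i : ℕ) < a then
        if (j : ℕ) < a then Afun b c ((i : ℕ) + 1) ((j : ℕ) + 1) else 0
      else
        if (j : ℕ) < a then Bfun b c n' m' ((j : ℕ) + 1) else 1)
    *
    (Matrix.of fun i j : Fin (a + 1) =>
      if (i : ℕ) < a then
        if (j : ℕ) < a then Cfun b c ((i : ℕ) + 1) ((j : ℕ) + 1)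
        else Dfun b c n m ((i : ℕ) + 1)
      else
        if (j : ℕ) < a then 0
        else ibinom (n + n' - b - c) (m - m' - c)
          - ∑ v ∈ Finset.Icc 1 a, Bfun b c n' m' v * Dfun b c n m v) := by
  ext i j
  rw [Matrix.mul_apply, Fin.sum_univ_castSucc]
  simp only [Matrix.of_apply, Fin.coe_castSucc, Fin.val_last, lt_self_iff_false, if_false,
    Fin.is_lt, if_true]
  by_cases hi : (i : ℕ) < a
  · by_cases hj : (j : ℕ) < a
    · simp only [hi, hj, if_true, mul_zero, zero_mul, add_zero]
      rw [fin_sum_to_Icc a (fun k => Afun b c ((i : ℕ) + 1) k * Cfun b c k ((j : ℕ) + 1)),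
        K3 a b c ((i : ℕ) + 1) ((j : ℕ) + 1) (by omega) (by omega) (by omega), ibinom_ch]
      congr 1 <;> (try push_cast) <;> (try ring)
    · simp only [hi, hj, if_true, if_false, mul_zero, zero_mul, add_zero]
      rw [fin_sum_to_Icc a (fun k => Afun b c ((i : ℕ) + 1) k * Dfun b c n m k),
        case2 a b c hc n m ((i : ℕ) + 1) (by omega) (by omega)]
      congr 1 <;> (try push_cast) <;> (try ring)
  · by_cases hj : (j : ℕ) < a
    · simp only [hi, hj, if_true, if_false, mul_zero, one_mul, add_zero]
      rw [fin_sum_to_Icc a (fun k => Bfun b c n' m' k * Cfun b c k ((j : ℕ) + 1)),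
        case3 a b c hb n' m' ((j : ℕ) + 1) (by omega) (by omega)]
      congr 1 <;> (try push_cast) <;> (try ring)
    · simp only [hi, hj, if_false, one_mul]
      rw [fin_sum_to_Icc a (fun k => Bfun b c n' m' k * Dfun b c n m k)]
      ring
end
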